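/- Let χ be a characteristic function with parameters r, d, and let a, b ∈ ℕ^d satisfy a ≤ b, 1 ≤ χ(b), χ(a) ≤ r−1, and [a] ≠ [b]. Then the pair ([a], [b]) lies in the transitive closure of the relation I_χ on P_χ. -/
import Mathlib


/-- Two points of `ℕ^d` are *adjacent*: they agree in all but one coordinate,
where they differ by exactly `1`. -/
def GridAdj {d : ℕ} (a b : Fin d → ℕ) : Prop :=
  ∃ j : Fin d, (∀ i : Fin d, i ≠ j → a i = b i) ∧ (a j = b j + 1 ∨ b j = a j + 1)

/-- The connected component of `a` inside the level set `χ⁻¹({χ a})`: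
all points reachable from `a` by paths of adjacent points on which `χ` keeps the value `χ a`. -/
def CompOf {d : ℕ} (χ : (Fin d → ℕ) → ℤ) (a : Fin d → ℕ) : Set (Fin d → ℕ) :=
  {b | Relation.ReflTransGen (fun x y => GridAdj x y ∧ χ x = χ a ∧ χ y = χ a) a b}

/-- `P_χ`: the set of connected components of the level sets `χ⁻¹({r - i})` for `1 ≤ i ≤ r - 1`,
i.e. components of level sets whose value lies in `[1, r-1]`. -/
def Pchi {d : ℕ} (r : ℕ) (χ : (Fin d → ℕ) → ℤ) : Set (Set (Fin d → ℕ)) :=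
  {p | ∃ a : Fin d → ℕ, 1 ≤ χ a ∧ χ a ≤ (r : ℤ) - 1 ∧ p = CompOf χ a}

/-- The incidence relation `I_χ` on components: `(p, q) ∈ I_χ` iff `d(p) < d(q)`
(equivalently, the `χ`-value on `p` exceeds that on `q`) and there are adjacent
`a ∈ p`, `b ∈ q` with `a ≤ b`. -/
def Ichi {d : ℕ} (χ : (Fin d → ℕ) → ℤ) (p q : Set (Fin d → ℕ)) : Prop :=
  ∃ a ∈ p, ∃ b ∈ q, GridAdj a b ∧ a ≤ b ∧ χ b < χ a

/-- A *characteristic function* with parameters `r, d`: `0 ≤ χ ≤ r`, finite support,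
and antitone for the componentwise order on `ℕ^d`. -/
def IsCharFun (r d : ℕ) (χ : (Fin d → ℕ) → ℤ) : Prop :=
  (∀ a, 0 ≤ χ a ∧ χ a ≤ (r : ℤ)) ∧ (Function.support χ).Finite ∧
    ∀ a b : Fin d → ℕ, a ≤ b → χ b ≤ χ a

/-- A rank `kk` incidence structure: a finite set `P` partitioned by the degree map
`deg : P → {1, …, kk}` together with a relation `I` only relating elements of
strictly increasing degree. -/
structure IncStruct (kk : ℕ) where
  P : Type
  finP : Finite P
  deg : P → ℕ
  deg_pos : ∀ p, 1 ≤ deg p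
  deg_le : ∀ p, deg p ≤ kk
  I : P → P → Prop
  I_lt : ∀ p q, I p q → deg p < deg q

/-- The incidence structure `S_χ` associated to a characteristic function `χ`
(with parameters `r, d`) is *equivalent* to the incidence structure `S`:
there is a degree-preserving bijection between `P_χ` and `S.P` under which
`I_χ` and `S.I` have the same transitive closure. -/
def EquivToSchi {d : ℕ} (r : ℕ) (χ : (Fin d → ℕ) → ℤ) {kk : ℕ} (S : IncStruct kk) : Prop :=
  ∃ e : {p : Set (Fin d → ℕ) // p ∈ Pchi r χ} ≃ S.P,
    (∀ p : {p : Set (Fin d → ℕ) // p ∈ Pchi r χ}, ∀ a ∈ p.1,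
      (S.deg (e p) : ℤ) = (r : ℤ) - χ a) ∧
    ∀ p q : {p : Set (Fin d → ℕ) // p ∈ Pchi r χ},
      Relation.TransGen
          (fun u v : {p : Set (Fin d → ℕ) // p ∈ Pchi r χ} => Ichi χ u.1 v.1) p q ↔
        Relation.TransGen S.I (e p) (e q)


lemma gridAdj_symm {d : ℕ} {a b : Fin d → ℕ} (h : GridAdj a b) : GridAdj b a := by
  obtain ⟨j, h1, h2⟩ := h
  exact ⟨j, fun i hi => (h1 i hi).symm, h2.symm⟩

lemma mem_compOf_self {d : ℕ} (χ : (Fin d → ℕ) → ℤ) (a : Fin d → ℕ) : a ∈ CompOf χ a :=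
  Relation.ReflTransGen.refl

lemma compOf_eq_of_adj {d : ℕ} (χ : (Fin d → ℕ) → ℤ) {a a' : Fin d → ℕ}
    (hadj : GridAdj a a') (h : χ a' = χ a) : CompOf χ a = CompOf χ a' := by
  unfold CompOf
  rw [h]
  ext x
  constructor
  · intro hx
    exact Relation.ReflTransGen.head ⟨gridAdj_symm hadj, h, rfl⟩ hx
  · intro hx
    exact Relation.ReflTransGen.head ⟨hadj, rfl, h⟩ hx

lemma statement3_aux {r d : ℕ}
    (χ : (Fin d → ℕ) → ℤ) (hχ : IsCharFun r d χ) :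
    ∀ n : ℕ, ∀ a b : Fin d → ℕ, (∑ i, (b i - a i)) = n → a ≤ b →
    1 ≤ χ b → χ a ≤ (r : ℤ) - 1 → CompOf χ a ≠ CompOf χ b →
    Relation.TransGen
      (fun p q : Set (Fin d → ℕ) => p ∈ Pchi r χ ∧ q ∈ Pchi r χ ∧ Ichi χ p q)
      (CompOf χ a) (CompOf χ b) := by
  obtain ⟨-, -, hmono⟩ := hχ
  intro n
  induction n with
  | zero =>
    intro a b hsum hab _ _ hne
    exfalso
    apply hne
    have : a = b := by
      funext i
      have hi : b i - a i = 0 := by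
        have := Finset.sum_eq_zero_iff.mp hsum i (Finset.mem_univ i)
        exact this
      have h2 : a i ≤ b i := hab i
      omega
    rw [this]
  | succ n ih =>
    intro a b hsum hab hb1 har hne
    -- find a coordinate where a < b
    have hj : ∃ j : Fin d, a j < b j := by
      by_contra hcon
      push_neg at hcon
      have : (∑ i, (b i - a i)) = 0 := by
        apply Finset.sum_eq_zero
        intro i _
        have := hcon i
        omega
      omega
    obtain ⟨j, hjlt⟩ := hj
    set a' : Fin d → ℕ := Function.update a j (a j + 1) with ha'
    have ha'j : a' j = a j + 1 := Function.update_self j (a j + 1) a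
    have ha'i : ∀ i, i ≠ j → a' i = a i := fun i hi => Function.update_of_ne hi _ a
    have haa' : a ≤ a' := by
      intro i
      rcases eq_or_ne i j with hij | hij
      · rw [hij, ha'j]; exact Nat.le_succ _
      · rw [ha'i i hij]
    have ha'b : a' ≤ b := by
      intro i
      rcases eq_or_ne i j with hij | hij
      · rw [hij, ha'j]; exact hjlt
      · rw [ha'i i hij]; exact hab i
    have hadj : GridAdj a a' := ⟨j, fun i hi => (ha'i i hi).symm, Or.inr ha'j⟩
    have hsum' : (∑ i, (b i - a' i)) = n := by
      have h1 : (∑ i, (b i - a i)) = (b j - a j) + ∑ i ∈ Finset.univ.erase j, (b i - a i) :=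
        (Finset.add_sum_erase _ _ (Finset.mem_univ j)).symm
      have h2 : (∑ i, (b i - a' i)) = (b j - a' j) + ∑ i ∈ Finset.univ.erase j, (b i - a' i) :=
        (Finset.add_sum_erase _ _ (Finset.mem_univ j)).symm
      have h3 : ∑ i ∈ Finset.univ.erase j, (b i - a' i) =
          ∑ i ∈ Finset.univ.erase j, (b i - a i) := by
        apply Finset.sum_congr rfl
        intro i hi
        rw [ha'i i (Finset.ne_of_mem_erase hi)]
      rw [h2, h3, ha'j]
      rw [h1] at hsum
      omega
    have hχa'a : χ a' ≤ χ a := hmono a a' haa'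
    have hχba' : χ b ≤ χ a' := hmono a' b ha'b
    by_cases hval : χ a' = χ a
    · rw [compOf_eq_of_adj χ hadj hval]
      rw [compOf_eq_of_adj χ hadj hval] at hne
      exact ih a' b hsum' ha'b hb1 (hval ▸ har) hne
    · have hlt : χ a' < χ a := lt_of_le_of_ne hχa'a hval
      have hPa : CompOf χ a ∈ Pchi r χ :=
        ⟨a, le_trans hb1 (le_trans hχba' hχa'a), har, rfl⟩
      have hPa' : CompOf χ a' ∈ Pchi r χ :=
        ⟨a', le_trans hb1 hχba', le_trans (le_of_lt hlt) har, rfl⟩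
      have hedge : Ichi χ (CompOf χ a) (CompOf χ a') :=
        ⟨a, mem_compOf_self χ a, a', mem_compOf_self χ a', hadj, haa', hlt⟩
      by_cases hcb : CompOf χ a' = CompOf χ b
      · exact Relation.TransGen.single ⟨hPa, hcb ▸ hPa', hcb ▸ hedge⟩
      · exact Relation.TransGen.head ⟨hPa, hPa', hedge⟩
          (ih a' b hsum' ha'b hb1 (le_trans (le_of_lt hlt) har) hcb)

/-- Let `χ` be a characteristic function with parameters `r, d`, and let
`a, b ∈ ℕ^d` satisfy `a ≤ b`, `1 ≤ χ(b)`, `χ(a) ≤ r−1`, and `[a] ≠ [b]`.  Then the pair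
`([a], [b])` lies in the transitive closure of the relation `I_χ` on `P_χ`. -/
theorem statement3 {r d : ℕ} (hr : 1 ≤ r) (hd : 1 ≤ d)
    (χ : (Fin d → ℕ) → ℤ) (hχ : IsCharFun r d χ)
    (a b : Fin d → ℕ) (hab : a ≤ b)
    (hb1 : 1 ≤ χ b) (har : χ a ≤ (r : ℤ) - 1)
    (hne : CompOf χ a ≠ CompOf χ b) :
    Relation.TransGen
      (fun p q : Set (Fin d → ℕ) => p ∈ Pchi r χ ∧ q ∈ Pchi r χ ∧ Ichi χ p q)
      (CompOf χ a) (CompOf χ b) := by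
  exact statement3_aux χ hχ _ a b rfl hab hb1 har hne
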